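/- For every nonnegative integer n, all real α, β, and every real x, (1+x) · (d/dx)P_n^{(α,β)}(x) + β · P_n^{(α,β)}(x) = (n+β) · P_n^{(α+1,β-1)}(x). -/

import Mathlib

open MeasureTheory Finset

/-- Rising factorial (Pochhammer symbol) `(a)_k = a(a+1)⋯(a+k-1)`. -/
noncomputable def poch (a : ℝ) (k : ℕ) : ℝ := ∏ i ∈ Finset.range k, (a + i)

/-- Jacobi polynomial
`P_n^{(α,β)}(x) = Σ_{k=0}^n ((α+k+1)_{n-k}/(n-k)!) ((n+α+β+1)_k/k!) ((x-1)/2)^k`. -/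
noncomputable def jacobiP (n : ℕ) (α β : ℝ) (x : ℝ) : ℝ :=
  ∑ k ∈ Finset.range (n + 1),
    poch (α + k + 1) (n - k) / ((n - k).factorial : ℝ) *
      (poch ((n : ℝ) + α + β + 1) k / (k.factorial : ℝ)) * ((x - 1) / 2) ^ k

noncomputable def jc (n : ℕ) (α β : ℝ) (k : ℕ) : ℝ :=
  poch (α + k + 1) (n - k) / ((n - k).factorial : ℝ) *
    (poch ((n : ℝ) + α + β + 1) k / (k.factorial : ℝ))

lemma jacobiP_eq (n : ℕ) (α β x : ℝ) :
    jacobiP n α β x = ∑ k ∈ Finset.range (n + 1), jc n α β k * ((x - 1) / 2) ^ k := rfl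

lemma poch_zero (a : ℝ) : poch a 0 = 1 := by simp [poch]

lemma poch_succ (a : ℝ) (k : ℕ) : poch a (k + 1) = poch a k * (a + k) := by
  simp [poch, Finset.prod_range_succ]

lemma poch_succ' (a : ℝ) (k : ℕ) : poch a (k + 1) = a * poch (a + 1) k := by
  unfold poch
  rw [Finset.prod_range_succ', show (a + ((0 : ℕ) : ℝ)) = a by simp, mul_comm]
  congr 1
  apply Finset.prod_congr rfl
  intro i _
  push_cast
  ring

lemma jacobi_hasDerivAt (n : ℕ) (α β x : ℝ) :
    HasDerivAt (fun t => jacobiP n α β t)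
      (∑ k ∈ Finset.range (n + 1),
        jc n α β k * ((k : ℝ) * ((x - 1) / 2) ^ (k - 1) * (1 / 2))) x := by
  have h : ∀ k ∈ Finset.range (n + 1),
      HasDerivAt (fun t : ℝ => jc n α β k * ((t - 1) / 2) ^ k)
        (jc n α β k * ((k : ℝ) * ((x - 1) / 2) ^ (k - 1) * (1 / 2))) x := by
    intro k _
    exact ((((hasDerivAt_id x).sub_const 1).div_const 2).pow k).const_mul _
  have := HasDerivAt.fun_sum h
  simpa [jacobiP_eq] using this

lemma jc_key (n k : ℕ) (hk : k < n) (α β : ℝ) :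
    ((k : ℝ) + 1) * jc n α β (k + 1) + ((k : ℝ) + β) * jc n α β k =
      ((n : ℝ) + β) * jc n (α + 1) (β - 1) k := by
  obtain ⟨m, rfl⟩ : ∃ m, n = k + 1 + m := ⟨n - (k + 1), by omega⟩
  have h1 : k + 1 + m - k = m + 1 := by omega
  have h2 : k + 1 + m - (k + 1) = m := by omega
  simp only [jc, h1, h2]
  have e1 : α + (((k + 1 : ℕ)) : ℝ) + 1 = α + (k : ℝ) + 2 := by push_cast; ring
  have e2 : α + (k : ℝ) + 1 + 1 = α + (k : ℝ) + 2 := by ring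
  have e3 : (((k + 1 + m : ℕ)) : ℝ) + (α + 1) + (β - 1) + 1
      = (((k + 1 + m : ℕ)) : ℝ) + α + β + 1 := by ring
  have e4 : α + 1 + (k : ℝ) + 1 + 1 = α + (k : ℝ) + 2 + 1 := by ring
  have e5 : α + 1 + (k : ℝ) + 1 = α + (k : ℝ) + 2 := by ring
  rw [e1, e3, poch_succ' (α + (k : ℝ) + 1) m, e2,
    poch_succ (((k + 1 + m : ℕ) : ℝ) + α + β + 1) k,
    poch_succ (α + 1 + (k : ℝ) + 1) m, e5,
    Nat.factorial_succ m, Nat.factorial_succ k]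
  have hm : ((m.factorial : ℝ)) ≠ 0 := Nat.cast_ne_zero.mpr m.factorial_ne_zero
  have hkf : ((k.factorial : ℝ)) ≠ 0 := Nat.cast_ne_zero.mpr k.factorial_ne_zero
  have hk1 : ((k : ℝ) + 1) ≠ 0 := by positivity
  have hm1 : ((m : ℝ) + 1) ≠ 0 := by positivity
  push_cast
  field_simp
  ring

theorem jacobi_diff_lower_beta (n : ℕ) (α β : ℝ) (x : ℝ) :
    (1 + x) * deriv (fun t => jacobiP n α β t) x + β * jacobiP n α β x =
      ((n : ℝ) + β) * jacobiP n (α + 1) (β - 1) x := by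
  set y : ℝ := (x - 1) / 2 with hy
  have hd := (jacobi_hasDerivAt n α β x).deriv
  rw [hd, jacobiP_eq, jacobiP_eq]
  have hx : (1 + x) = 2 * (1 + y) := by rw [hy]; ring
  rw [hx, Finset.mul_sum, Finset.mul_sum, Finset.mul_sum, ← Finset.sum_add_distrib]
  have step1 : ∀ k ∈ Finset.range (n + 1),
      2 * (1 + y) * (jc n α β k * ((k : ℝ) * y ^ (k - 1) * (1 / 2)))
        + β * (jc n α β k * y ^ k)
      = jc n α β k * (k : ℝ) * y ^ (k - 1)
        + ((k : ℝ) + β) * jc n α β k * y ^ k := by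
    intro k _
    rcases Nat.eq_zero_or_pos k with rfl | hk
    · simp
    · obtain ⟨j, rfl⟩ := Nat.exists_eq_add_of_lt hk
      simp only [Nat.add_sub_cancel, zero_add]
      push_cast
      ring
  rw [Finset.sum_congr rfl step1, Finset.sum_add_distrib]
  have step2 : ∑ k ∈ Finset.range (n + 1), jc n α β k * (k : ℝ) * y ^ (k - 1)
      = ∑ k ∈ Finset.range n, ((k : ℝ) + 1) * jc n α β (k + 1) * y ^ k := by
    rw [Finset.sum_range_succ']
    simp only [Nat.cast_zero, mul_zero, zero_mul, add_zero]
    refine Finset.sum_congr rfl fun k _ => ?_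
    simp only [Nat.add_sub_cancel]
    push_cast
    ring
  rw [step2, Finset.sum_range_succ, Finset.sum_range_succ]
  have hlast : ((n : ℝ) + β) * jc n α β n = ((n : ℝ) + β) * jc n (α + 1) (β - 1) n := by
    simp only [jc, Nat.sub_self, Nat.factorial_zero, poch_zero]
    have : ((n : ℝ)) + (α + 1) + (β - 1) + 1 = (n : ℝ) + α + β + 1 := by ring
    rw [this]
  have main : ∑ k ∈ Finset.range n, ((k : ℝ) + 1) * jc n α β (k + 1) * y ^ k
      + ∑ k ∈ Finset.range n, ((k : ℝ) + β) * jc n α β k * y ^ k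
      = ∑ k ∈ Finset.range n, ((n : ℝ) + β) * (jc n (α + 1) (β - 1) k * y ^ k) := by
    rw [← Finset.sum_add_distrib]
    refine Finset.sum_congr rfl fun k hk => ?_
    have := jc_key n k (Finset.mem_range.mp hk) α β
    calc ((k : ℝ) + 1) * jc n α β (k + 1) * y ^ k + ((k : ℝ) + β) * jc n α β k * y ^ k
        = (((k : ℝ) + 1) * jc n α β (k + 1) + ((k : ℝ) + β) * jc n α β k) * y ^ k := by ring
      _ = ((n : ℝ) + β) * (jc n (α + 1) (β - 1) k * y ^ k) := by rw [this]; ring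
  calc ∑ k ∈ Finset.range n, ((k : ℝ) + 1) * jc n α β (k + 1) * y ^ k
      + (∑ k ∈ Finset.range n, ((k : ℝ) + β) * jc n α β k * y ^ k
        + ((n : ℝ) + β) * jc n α β n * y ^ n)
      = (∑ k ∈ Finset.range n, ((k : ℝ) + 1) * jc n α β (k + 1) * y ^ k
        + ∑ k ∈ Finset.range n, ((k : ℝ) + β) * jc n α β k * y ^ k)
        + ((n : ℝ) + β) * jc n α β n * y ^ n := by ring
    _ = ∑ k ∈ Finset.range n, ((n : ℝ) + β) * (jc n (α + 1) (β - 1) k * y ^ k)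
        + ((n : ℝ) + β) * (jc n (α + 1) (β - 1) n * y ^ n) := by
        rw [main, hlast]; ring
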